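/- For fixed a, b ∈ ℕ, the set A(a,b) = {n ∈ ℕ : φ̃(n) = a and ω(n) = b} is finite. -/

import Mathlib

/-- φ̃(n): number of m with 1 ≤ m ≤ n, gcd(m,n)=1, m not prime. -/
def phiT (n : ℕ) : ℕ :=
  ((Finset.Icc 1 n).filter (fun m => Nat.gcd m n = 1 ∧ ¬ m.Prime)).card

/-- The product of the first k primes. -/
noncomputable def primorialN (k : ℕ) : ℕ := ∏ i ∈ Finset.range k, Nat.nth Nat.Prime i

theorem stmt11 (a b : ℕ) :
    {n : ℕ | phiT n = a ∧ n.primeFactors.card = b}.Finite := by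
  set P := Nat.nth Nat.Prime (a + b) with hP
  apply Set.Finite.subset (Set.finite_Iio (P ^ 2))
  rintro n ⟨hphi, homega⟩
  by_contra hn
  simp only [Set.mem_Iio, not_lt] at hn
  -- n ≥ P^2 > 0
  have hPprime : P.Prime := Nat.prime_nth_prime _
  have hn0 : 0 < n := lt_of_lt_of_le (pow_pos hPprime.pos 2) hn
  -- the first a+b+1 primes
  set T : Finset ℕ := Finset.image (Nat.nth Nat.Prime) (Finset.range (a + b + 1)) with hT
  have hinj : Function.Injective (Nat.nth Nat.Prime) :=
    Nat.nth_injective Nat.infinite_setOf_prime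
  have hTcard : T.card = a + b + 1 := by
    rw [hT, Finset.card_image_of_injective _ hinj, Finset.card_range]
  have hTprime : ∀ p ∈ T, p.Prime := by
    intro p hp
    simp only [hT, Finset.mem_image] at hp
    obtain ⟨i, _, rfl⟩ := hp
    exact Nat.prime_nth_prime _
  have hTle : ∀ p ∈ T, p ≤ P := by
    intro p hp
    simp only [hT, Finset.mem_image] at hp
    obtain ⟨i, hi, rfl⟩ := hp
    exact Nat.nth_monotone Nat.infinite_setOf_prime (Nat.lt_succ_iff.mp (Finset.mem_range.mp hi))
  -- primes in T dividing n are at most b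
  have hdvd_card : (T.filter (fun p => p ∣ n)).card ≤ b := by
    have hsub : T.filter (fun p => p ∣ n) ⊆ n.primeFactors := by
      intro p hp
      rw [Finset.mem_filter] at hp
      exact Nat.mem_primeFactors.mpr ⟨hTprime p hp.1, hp.2, hn0.ne'⟩
    calc (T.filter (fun p => p ∣ n)).card ≤ n.primeFactors.card := Finset.card_le_card hsub
      _ = b := homega
  have hnd_card : a + 1 ≤ (T.filter (fun p => ¬ p ∣ n)).card := by
    have := Finset.card_filter_add_card_filter_not (s := T) (p := fun p => p ∣ n)
    omega
  -- map p ↦ p^2 into the phiT set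
  have hmap : a + 1 ≤ phiT n := by
    rw [phiT]
    calc a + 1 ≤ (T.filter (fun p => ¬ p ∣ n)).card := hnd_card
      _ ≤ _ := by
        apply Finset.card_le_card_of_injOn (fun p => p ^ 2)
        · intro p hp
          rw [Finset.mem_coe, Finset.mem_filter] at hp
          obtain ⟨hpT, hpnd⟩ := hp
          have hpprime := hTprime p hpT
          refine Finset.mem_filter.mpr ⟨Finset.mem_Icc.mpr ⟨?_, ?_⟩, ?_, ?_⟩
          · exact Nat.one_le_iff_ne_zero.mpr (pow_ne_zero 2 hpprime.pos.ne')
          · calc p ^ 2 ≤ P ^ 2 := Nat.pow_le_pow_left (hTle p hpT) 2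
              _ ≤ n := hn
          · exact (Nat.Coprime.pow_left 2 ((hpprime.coprime_iff_not_dvd).mpr hpnd))
          · intro hprime
            have : p ∣ p ^ 2 := dvd_pow_self p two_ne_zero
            have := (Nat.Prime.eq_one_or_self_of_dvd hprime p this).resolve_left
              hpprime.one_lt.ne'
            nlinarith [hpprime.two_le]
        · intro x _ y _ hxy
          exact Nat.pow_left_injective (by norm_num) hxy
  omega
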